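/- Let Γ be a Coxeter graph with canonical root system Φ and canonical bilinear form ⟨·,·⟩, and for α ∈ Φ let r_α denote the reflection x ↦ x - ⟨α,x⟩α. Define ≡ to be the equivalence relation on Φ generated by the relation α ≡₁ β ⟺ ⟨α,β⟩ ∉ {0, 1, -1}. Then for all α, β ∈ Φ with α ≡ β, we have α ≡ r_α(β) and β ≡ r_α(β). -/

import Mathlib

open Real

/-- A Coxeter matrix on the set `S`, with `0` representing the label `∞`. -/
structure CoxeterMat (S : Type*) where
  m : S → S → ℕ
  diagonal : ∀ s, m s s = 1
  symmetric : ∀ s t, m s t = m t s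
  off_diagonal : ∀ s t, s ≠ t → m s t ≠ 1

namespace CoxeterMat

variable {S : Type*} (M : CoxeterMat S)

/-- The coefficient `⟨α_s, α_t⟩ = -2 cos (π / m_{s,t})`, with value `-2` when `m_{s,t} = ∞`. -/
noncomputable def c (s t : S) : ℝ :=
  if M.m s t = 0 then -2 else -2 * Real.cos (Real.pi / (M.m s t : ℝ))

/-- The simple root `α_s` in `V = ⊕_{s ∈ S} ℝ α_s`. -/
noncomputable def sroot (s : S) : S →₀ ℝ := Finsupp.single s 1

/-- The canonical bilinear form of the Coxeter graph. -/
noncomputable def bform : (S →₀ ℝ) →ₗ[ℝ] (S →₀ ℝ) →ₗ[ℝ] ℝ :=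
  Finsupp.lift _ ℝ S fun s => Finsupp.lift ℝ ℝ S fun t => M.c s t

/-- The simple reflection `σ_s : x ↦ x - ⟨α_s, x⟩ α_s`. -/
noncomputable def sigma (s : S) : (S →₀ ℝ) →ₗ[ℝ] (S →₀ ℝ) :=
  LinearMap.id - (M.bform (sroot s)).smulRight (sroot s)

/-- The Coxeter group `W`, realized as the subgroup of linear automorphisms of `V`
generated by the simple reflections. -/
noncomputable def Wgrp : Subgroup ((S →₀ ℝ) ≃ₗ[ℝ] (S →₀ ℝ)) :=
  Subgroup.closure {w | ∃ s : S, (w : (S →₀ ℝ) →ₗ[ℝ] (S →₀ ℝ)) = M.sigma s}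

/-- The canonical root system `Φ = {w(α_s) | w ∈ W, s ∈ S}`. -/
def Phi : Set (S →₀ ℝ) := {b | ∃ w ∈ M.Wgrp, ∃ s : S, b = w (sroot s)}

/-- The set of positive roots. -/
def PhiPos : Set (S →₀ ℝ) := {b | b ∈ M.Phi ∧ ∀ s, 0 ≤ b s}

/-- The equivalence relation `≡` on `Φ` generated by `α ≡₁ β ⟺ ⟨α, β⟩ ∉ {0, 1, -1}`. -/
def equivR : (S →₀ ℝ) → (S →₀ ℝ) → Prop :=
  Relation.EqvGen (fun a b => a ∈ M.Phi ∧ b ∈ M.Phi ∧ M.bform a b ∉ ({0, 1, -1} : Set ℝ))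

/-- The underlying graph of the Coxeter graph: `s` and `t` are joined iff `m_{s,t} ≥ 3`
(including `m_{s,t} = ∞`). -/
def graph : SimpleGraph S where
  Adj s t := s ≠ t ∧ M.m s t ≠ 2
  symm := ⟨fun s t h => ⟨h.1.symm, by rw [M.symmetric]; exact h.2⟩⟩
  loopless := ⟨fun s h => h.1 rfl⟩

/-- The action of a permutation of `S` on `V`. -/
noncomputable def permV (g : Equiv.Perm S) : (S →₀ ℝ) ≃ₗ[ℝ] (S →₀ ℝ) :=
  Finsupp.domLCongr g

/-- The set of elements of `W` fixed by the group `G` of symmetries (acting by conjugation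
by the corresponding permutations of coordinates). -/
noncomputable def WfixG (G : Subgroup (Equiv.Perm S)) :
    Set ((S →₀ ℝ) ≃ₗ[ℝ] (S →₀ ℝ)) :=
  {w | w ∈ M.Wgrp ∧ ∀ g ∈ G, permV g * w = w * permV g}

/-- Construct a simply laced Coxeter matrix from an adjacency relation. -/
noncomputable def ofAdj (A : S → S → Prop) (hs : ∀ s t, A s t → A t s)
    (hi : ∀ s, ¬ A s s) : CoxeterMat S where
  m s t := open Classical in if s = t then 1 else if A s t then 3 else 2
  diagonal s := by simp
  symmetric s t := by
    classical
    by_cases h : s = t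
    · subst h; rfl
    · have h' : t ≠ s := Ne.symm h
      simp only [if_neg h, if_neg h']
      by_cases hA : A s t
      · rw [if_pos hA, if_pos (hs s t hA)]
      · rw [if_neg hA, if_neg (fun h2 => hA (hs t s h2))]
  off_diagonal s t h := by
    classical
    simp only [if_neg h]
    split <;> norm_num

/-- Isomorphism of Coxeter graphs. -/
def Iso {T : Type*} (M : CoxeterMat S) (N : CoxeterMat T) : Prop :=
  ∃ e : S ≃ T, ∀ s t, N.m (e s) (e t) = M.m s t

/-- The full Coxeter subgraph spanned by `Y ⊆ S`. -/
def restrict (Y : Set S) : CoxeterMat Y where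
  m s t := M.m s t
  diagonal s := M.diagonal s
  symmetric s t := M.symmetric s t
  off_diagonal s t h := M.off_diagonal s t (fun hh => h (Subtype.ext hh))

end CoxeterMat

open CoxeterMat

/-- The Coxeter graph `A_n`: a path with `n` vertices. -/
noncomputable def pathA (n : ℕ) : CoxeterMat (Fin n) :=
  ofAdj (fun i j => i.val + 1 = j.val ∨ j.val + 1 = i.val)
    (fun _ _ h => h.symm)
    (fun s h => by rcases h with h | h <;> omega)

/-- The Coxeter graph `D_n`: a path `0 — 1 — ⋯ — (n-2)` together with an extra vertex `n-1`
joined to `n-3`. -/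
noncomputable def Dmat (n : ℕ) : CoxeterMat (Fin n) :=
  ofAdj (fun i j => i ≠ j ∧
      (((i.val + 1 = j.val ∧ j.val ≤ n - 2) ∨ (i.val + 2 = j.val ∧ j.val = n - 1)) ∨
       ((j.val + 1 = i.val ∧ i.val ≤ n - 2) ∨ (j.val + 2 = i.val ∧ i.val = n - 1))))
    (fun _ _ h => ⟨h.1.symm, h.2.symm⟩)
    (fun s h => h.1 rfl)

/-- Adjacency relation determined by a list of edges. -/
def listAdj {n : ℕ} (L : List (Fin n × Fin n)) (i j : Fin n) : Prop :=
  (i, j) ∈ L ∨ (j, i) ∈ L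

instance {n : ℕ} (L : List (Fin n × Fin n)) (i j : Fin n) : Decidable (listAdj L i j) := by
  unfold listAdj; infer_instance

/-- The Coxeter graph `E₆`. -/
noncomputable def E6mat : CoxeterMat (Fin 6) :=
  ofAdj (listAdj [(0,2),(2,3),(3,4),(4,5),(1,3)])
    (fun _ _ h => h.symm) (by decide)

/-- The Coxeter graph `E₇`. -/
noncomputable def E7mat : CoxeterMat (Fin 7) :=
  ofAdj (listAdj [(0,2),(2,3),(3,4),(4,5),(5,6),(1,3)])
    (fun _ _ h => h.symm) (by decide)

/-- The Coxeter graph `E₈`. -/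
noncomputable def E8mat : CoxeterMat (Fin 8) :=
  ofAdj (listAdj [(0,2),(2,3),(3,4),(4,5),(5,6),(6,7),(1,3)])
    (fun _ _ h => h.symm) (by decide)

/-- The Coxeter graph `A_∞`: the one-sided infinite path. -/
noncomputable def Ainf : CoxeterMat ℕ :=
  ofAdj (fun i j => i + 1 = j ∨ j + 1 = i)
    (fun _ _ h => h.symm)
    (fun s h => by omega)

/-- The Coxeter graph `_∞A_∞`: the two-sided infinite path. -/
noncomputable def ZAinf : CoxeterMat ℤ :=
  ofAdj (fun i j => i + 1 = j ∨ j + 1 = i)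
    (fun _ _ h => h.symm)
    (fun s h => by omega)

/-- The Coxeter graph `D_∞`: vertices `0, 1, 2, 3, …` with `0` and `1` joined to `2` and a
path `2 — 3 — 4 — ⋯`. -/
noncomputable def Dinf : CoxeterMat ℕ :=
  ofAdj (fun i j => i ≠ j ∧
      (((i = 0 ∧ j = 2) ∨ (i = 1 ∧ j = 2) ∨ (i + 1 = j ∧ 2 ≤ i)) ∨
       ((j = 0 ∧ i = 2) ∨ (j = 1 ∧ i = 2) ∨ (j + 1 = i ∧ 2 ≤ j))))
    (fun _ _ h => ⟨h.1.symm, h.2.symm⟩)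
    (fun s h => h.1 rfl)

/-- The affine Coxeter graph `Ã_n`: a cycle with `n + 1` vertices. -/
noncomputable def affA (n : ℕ) : CoxeterMat (ZMod (n + 1)) :=
  ofAdj (fun i j => i ≠ j ∧ (i + 1 = j ∨ j + 1 = i))
    (fun _ _ h => ⟨h.1.symm, h.2.symm⟩)
    (fun s h => h.1 rfl)

/-- The affine Coxeter graph `D̃_n` (on `n + 1` vertices, Bourbaki numbering): `0` and `1`
joined to `2`, a path `2 — 3 — ⋯ — (n-1)`, and `n` joined to `n-2`. -/
noncomputable def affD (n : ℕ) : CoxeterMat (Fin (n + 1)) :=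
  ofAdj (fun i j => i ≠ j ∧
      (((i.val = 0 ∧ j.val = 2) ∨ (i.val = 1 ∧ j.val = 2) ∨
        (i.val + 1 = j.val ∧ 2 ≤ i.val ∧ i.val ≤ n - 2) ∨
        (i.val = n - 2 ∧ j.val = n)) ∨
       ((j.val = 0 ∧ i.val = 2) ∨ (j.val = 1 ∧ i.val = 2) ∨
        (j.val + 1 = i.val ∧ 2 ≤ j.val ∧ j.val ≤ n - 2) ∨
        (j.val = n - 2 ∧ i.val = n))))
    (fun _ _ h => ⟨h.1.symm, h.2.symm⟩)
    (fun s h => h.1 rfl)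

/-- The affine Coxeter graph `Ẽ₆` (Bourbaki numbering, affine vertex `0`). -/
noncomputable def affE6 : CoxeterMat (Fin 7) :=
  ofAdj (listAdj [(1,3),(3,4),(4,5),(5,6),(2,4),(0,2)])
    (fun _ _ h => h.symm) (by decide)

/-- The affine Coxeter graph `Ẽ₇` (Bourbaki numbering, affine vertex `0`). -/
noncomputable def affE7 : CoxeterMat (Fin 8) :=
  ofAdj (listAdj [(0,1),(1,3),(3,4),(4,5),(5,6),(6,7),(2,4)])
    (fun _ _ h => h.symm) (by decide)

/-- The affine Coxeter graph `Ẽ₈` (Bourbaki numbering, affine vertex `0`). -/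
noncomputable def affE8 : CoxeterMat (Fin 9) :=
  ofAdj (listAdj [(1,3),(3,4),(4,5),(5,6),(6,7),(7,8),(2,4),(0,8)])
    (fun _ _ h => h.symm) (by decide)

section Aux

namespace CoxeterMat

variable {S : Type*} (M : CoxeterMat S)

lemma c_comm (s t : S) : M.c s t = M.c t s := by
  unfold c; rw [M.symmetric]

lemma bform_single (s t : S) : M.bform (sroot s) (sroot t) = M.c s t := by
  simp [bform, sroot]

lemma c_self (s : S) : M.c s s = 2 := by
  have h1 : M.m s s = 1 := M.diagonal s
  simp [c, h1]

lemma bform_self_single (s : S) : M.bform (sroot s) (sroot s) = 2 := by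
  rw [bform_single, c_self]

lemma bform_comm (x y : S →₀ ℝ) : M.bform x y = M.bform y x := by
  induction x using Finsupp.induction_linear with
  | zero => simp
  | add u v hu hv => simp [hu, hv]
  | single s r =>
    induction y using Finsupp.induction_linear with
    | zero => simp
    | add u v hu hv => simp [hu, hv]
    | single t r' => simp [bform, M.c_comm s t]; ring

lemma sigma_apply (s : S) (x : S →₀ ℝ) :
    M.sigma s x = x - M.bform (sroot s) x • sroot s := by
  simp [sigma]

lemma sigma_involutive (s : S) : Function.Involutive (M.sigma s) := by
  intro x
  simp only [sigma_apply, map_sub, map_smul, smul_eq_mul, bform_self_single]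
  module

lemma bform_sigma (s : S) (x y : S →₀ ℝ) :
    M.bform (M.sigma s x) (M.sigma s y) = M.bform x y := by
  simp only [sigma_apply, map_sub, map_smul, smul_eq_mul, LinearMap.sub_apply,
    LinearMap.smul_apply, bform_self_single]
  rw [M.bform_comm (sroot s) x]
  ring

lemma bform_w (w : (S →₀ ℝ) ≃ₗ[ℝ] (S →₀ ℝ)) (hw : w ∈ M.Wgrp) : ∀ x y : S →₀ ℝ,
    M.bform (w x) (w y) = M.bform x y := by
  induction hw using Subgroup.closure_induction with
  | mem w hw =>
    intro x y
    obtain ⟨s, hs⟩ := hw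
    have hx : w x = M.sigma s x := by rw [← hs]; rfl
    have hy : w y = M.sigma s y := by rw [← hs]; rfl
    rw [hx, hy, bform_sigma]
  | one => intro x y; rfl
  | mul u v hu hv ihu ihv =>
    intro x y
    have h0 : ∀ z, (u * v) z = u (v z) := fun z => rfl
    rw [h0, h0, ihu, ihv]
  | inv u hu ihu =>
    intro x y
    have h1 : ∀ z, u ((u⁻¹ : _) z) = z := fun z => u.apply_symm_apply z
    calc M.bform ((u⁻¹ : _) x) ((u⁻¹ : _) y)
        = M.bform (u ((u⁻¹ : _) x)) (u ((u⁻¹ : _) y)) := (ihu _ _).symm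
      _ = M.bform x y := by rw [h1, h1]

lemma w_mem_Phi (w : (S →₀ ℝ) ≃ₗ[ℝ] (S →₀ ℝ)) (hw : w ∈ M.Wgrp) {x : S →₀ ℝ}
    (hx : x ∈ M.Phi) : w x ∈ M.Phi := by
  obtain ⟨w', hw', s, rfl⟩ := hx
  exact ⟨w * w', mul_mem hw hw', s, rfl⟩

/-- The simple reflection as a linear equivalence. -/
noncomputable def sigmaEquiv (s : S) : (S →₀ ℝ) ≃ₗ[ℝ] (S →₀ ℝ) :=
  LinearEquiv.ofInvolutive (M.sigma s) (M.sigma_involutive s)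

lemma sigmaEquiv_mem : ∀ s : S, M.sigmaEquiv s ∈ M.Wgrp := fun s =>
  Subgroup.subset_closure ⟨s, rfl⟩

lemma bform_self (x : S →₀ ℝ) (hx : x ∈ M.Phi) : M.bform x x = 2 := by
  obtain ⟨w, hw, s, rfl⟩ := hx
  rw [M.bform_w w hw, bform_self_single]

/-- The reflection in a root `a` is realized by an element of `W`. -/
lemma exists_refl (a : S →₀ ℝ) (ha : a ∈ M.Phi) :
    ∃ u ∈ M.Wgrp, ∀ x, u x = x - M.bform a x • a := by
  obtain ⟨w, hw, s, rfl⟩ := ha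
  refine ⟨w * M.sigmaEquiv s * w⁻¹, mul_mem (mul_mem hw (M.sigmaEquiv_mem s)) (inv_mem hw), ?_⟩
  intro x
  have h1 : (w * M.sigmaEquiv s * w⁻¹) x = w (M.sigmaEquiv s ((w⁻¹ : _) x)) := rfl
  have h2 : M.sigmaEquiv s ((w⁻¹ : _) x) = M.sigma s ((w⁻¹ : _) x) := rfl
  rw [h1, h2, sigma_apply, map_sub, map_smul]
  have h3 : w ((w⁻¹ : _) x) = x := w.apply_symm_apply x
  have h4 : M.bform (sroot s) ((w⁻¹ : _) x) = M.bform (w (sroot s)) x := by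
    rw [← M.bform_w w hw (sroot s) ((w⁻¹ : _) x), h3]
  rw [h3, h4]

lemma neg_mem_Phi {a : S →₀ ℝ} (ha : a ∈ M.Phi) : -a ∈ M.Phi := by
  obtain ⟨u, hu, hu2⟩ := M.exists_refl a ha
  have : u a = -a := by rw [hu2, M.bform_self a ha]; module
  rw [← this]
  exact M.w_mem_Phi u hu ha

lemma equivR_neg {a : S →₀ ℝ} (ha : a ∈ M.Phi) : M.equivR a (-a) := by
  apply Relation.EqvGen.rel
  refine ⟨ha, M.neg_mem_Phi ha, ?_⟩
  rw [map_neg, M.bform_self a ha]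
  norm_num

end CoxeterMat

end Aux

theorem stmt4 {S : Type*} (M : CoxeterMat S) (a b : S →₀ ℝ)
    (ha : a ∈ M.Phi) (hb : b ∈ M.Phi) (h : M.equivR a b) :
    M.equivR a (b - M.bform a b • a) ∧ M.equivR b (b - M.bform a b • a) := by
  obtain ⟨u, hu, hu2⟩ := M.exists_refl a ha
  -- `r z = z - ⟨a,z⟩ a` is given by `u ∈ W`
  have hrPhi : ∀ z ∈ M.Phi, z - M.bform a z • a ∈ M.Phi := by
    intro z hz; rw [← hu2]; exact M.w_mem_Phi u hu hz
  have hrform : ∀ x y, M.bform (x - M.bform a x • a) (y - M.bform a y • a) = M.bform x y := by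
    intro x y; rw [← hu2, ← hu2]; exact M.bform_w u hu x y
  have hQa : M.equivR a (a - M.bform a a • a) := by
    have : a - M.bform a a • a = -a := by rw [M.bform_self a ha]; module
    rw [this]; exact M.equivR_neg ha
  have key : ∀ x y, M.equivR x y → x = y ∨ (x ∈ M.Phi ∧ y ∈ M.Phi ∧ M.equivR x y ∧
      (M.equivR a (x - M.bform a x • a) ↔ M.equivR a (y - M.bform a y • a))) := by
    intro x y hxy
    induction hxy with
    | rel x y hr =>
      obtain ⟨hx, hy, hv⟩ := hr
      right
      refine ⟨hx, hy, Relation.EqvGen.rel _ _ ⟨hx, hy, hv⟩, ?_⟩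
      have hrel : M.equivR (x - M.bform a x • a) (y - M.bform a y • a) :=
        Relation.EqvGen.rel _ _ ⟨hrPhi x hx, hrPhi y hy, by rw [hrform]; exact hv⟩
      exact ⟨fun h1 => Relation.EqvGen.trans _ _ _ h1 hrel,
             fun h1 => Relation.EqvGen.trans _ _ _ h1 (Relation.EqvGen.symm _ _ hrel)⟩
    | refl x => left; rfl
    | symm x y hxy ih =>
      rcases ih with h1 | ⟨h1, h2, h3, h4⟩
      · left; exact h1.symm
      · right; exact ⟨h2, h1, Relation.EqvGen.symm _ _ h3, h4.symm⟩
    | trans x y z hxy hyz ih1 ih2 =>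
      rcases ih1 with h1 | ⟨h1, h2, h3, h4⟩
      · rcases ih2 with h5 | ⟨h5, h6, h7, h8⟩
        · left; exact h1.trans h5
        · right; exact ⟨h1 ▸ h5, h6, h1 ▸ h7, h1 ▸ h8⟩
      · rcases ih2 with h5 | ⟨h5, h6, h7, h8⟩
        · right; exact ⟨h1, h5 ▸ h2, h5 ▸ h3, h5 ▸ h4⟩
        · right; exact ⟨h1, h6, Relation.EqvGen.trans _ _ _ h3 h7, h4.trans h8⟩
  rcases key a b h with h1 | ⟨_, _, _, h4⟩
  · subst h1; exact ⟨hQa, hQa⟩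
  · have hab : M.equivR a (b - M.bform a b • a) := h4.mp hQa
    exact ⟨hab, Relation.EqvGen.trans _ _ _ (Relation.EqvGen.symm _ _ h) hab⟩
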